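/- Let n ≥ 2, 0 < α, β < 2, 1 ≤ p < ∞, and let u ∈ C^{1,1}_loc ∩ L_α, v ∈ C^{1,1}_loc ∩ L_β be a positive solution pair of the system (-Δ)^{α/2}u + u = v u^{p-1}, (-Δ)^{β/2}v = u^p on ℝⁿ. Let λ₀ ∈ ℝ and suppose U_{λ₀}(x) ≥ 0 and V_{λ₀}(x) ≥ 0 for all x ∈ Σ_{λ₀}. If there exists x̃ ∈ Σ_{λ₀} with U_{λ₀}(x̃) = 0, or there exists x̃ ∈ Σ_{λ₀} with V_{λ₀}(x̃) = 0, then U_{λ₀} ≡ 0 and V_{λ₀} ≡ 0 on all of ℝⁿ; in particular u(x^{λ₀}) = u(x) and v(x^{λ₀}) = v(x) for all x ∈ ℝⁿ. -/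

import Mathlib

open MeasureTheory Filter Metric Set Bornology

noncomputable section

/-- The space `ℝⁿ`. -/
abbrev En (n : ℕ) := EuclideanSpace ℝ (Fin n)

/-- Membership in the weighted space `L_σ`. -/
def MemL (n : ℕ) (σ : ℝ) (w : En n → ℝ) : Prop :=
  LocallyIntegrable w volume ∧
    Integrable (fun x : En n => |w x| / (1 + ‖x‖ ^ ((n : ℝ) + σ))) volume

/-- `C^{1,1}_loc` on an open set `Ω`: near every point of `Ω`, `w` is
differentiable with Lipschitz-continuous derivative. -/
def C11locOn (n : ℕ) (Ω : Set (En n)) (w : En n → ℝ) : Prop :=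
  ∀ x ∈ Ω, ∃ ε > 0, ∃ K : NNReal, ball x ε ⊆ Ω ∧
    (∀ y ∈ ball x ε, DifferentiableAt ℝ w y) ∧
    LipschitzOnWith K (fderiv ℝ w) (ball x ε)

/-- `C^{1,1}_loc` on all of `ℝⁿ`. -/
def C11loc (n : ℕ) (w : En n → ℝ) : Prop := C11locOn n univ w

/-- `HasFracLap n σ c w x L` : the fractional Laplacian `(-Δ)^{σ/2} w`, with
normalization constant `c = C_{n,σ} > 0`, exists at `x` as a principal value
and is equal to `L`. -/
def HasFracLap (n : ℕ) (σ c : ℝ) (w : En n → ℝ) (x : En n) (L : ℝ) : Prop :=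
  Tendsto
    (fun ε : ℝ => c * ∫ y in {y : En n | ε ≤ dist x y},
        (w x - w y) / dist x y ^ ((n : ℝ) + σ))
    (nhdsWithin 0 (Ioi 0)) (nhds L)

/-- Reflection `x ↦ x^λ` about the hyperplane `T_λ = {x : x₁ = λ}`. -/
def reflPt (n : ℕ) [NeZero n] (l : ℝ) (x : En n) : En n :=
  WithLp.toLp 2 fun i => if i = 0 then 2 * l - x 0 else x i

/-- The half space `Σ_λ = {x : x₁ < λ}`. -/
def halfSpace (n : ℕ) [NeZero n] (l : ℝ) : Set (En n) := {x | x 0 < l}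

section AuxMovingPlane

variable {n : ℕ} [NeZero n] {l : ℝ}

lemma reflPt_apply_zero (x : En n) : reflPt n l x 0 = 2 * l - x 0 := by simp [reflPt]

lemma reflPt_apply_ne (x : En n) {i : Fin n} (h : i ≠ 0) : reflPt n l x i = x i := by simp [reflPt, h]

lemma reflPt_invol (x : En n) : reflPt n l (reflPt n l x) = x := by
  ext i
  rcases eq_or_ne i 0 with h | h
  · subst h; rw [reflPt_apply_zero, reflPt_apply_zero]; ring
  · rw [reflPt_apply_ne _ h, reflPt_apply_ne _ h]

lemma dist_coord_reflPt (x y : En n) (i : Fin n) :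
    dist (reflPt n l x i) (reflPt n l y i) = dist (x i) (y i) := by
  rcases eq_or_ne i 0 with h | h
  · subst h
    rw [reflPt_apply_zero, reflPt_apply_zero, Real.dist_eq, Real.dist_eq, abs_sub_comm]
    congr 1; ring
  · rw [reflPt_apply_ne _ h, reflPt_apply_ne _ h]

lemma dist_reflPt (x y : En n) : dist (reflPt n l x) (reflPt n l y) = dist x y := by
  rw [EuclideanSpace.dist_eq, EuclideanSpace.dist_eq]
  congr 1
  exact Finset.sum_congr rfl fun i _ => by rw [dist_coord_reflPt]

lemma dist_reflPt_self (x : En n) : dist (reflPt n l x) x = |2 * l - 2 * x 0| := by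
  rw [EuclideanSpace.dist_eq]
  have hsum : ∑ i, dist (reflPt n l x i) (x i) ^ 2 = (2 * l - 2 * x 0) ^ 2 := by
    rw [Finset.sum_eq_single 0]
    · rw [reflPt_apply_zero, Real.dist_eq]
      rw [sq_abs]
      congr 1; ring
    · intro i _ hi
      rw [reflPt_apply_ne _ hi, dist_self]
      norm_num
    · intro h; exact absurd (Finset.mem_univ _) h
  rw [hsum, Real.sqrt_sq_eq_abs]

/-- negation of the first coordinate, as a linear isometry equiv -/
def negFirst (n : ℕ) [NeZero n] : En n ≃ₗᵢ[ℝ] En n :=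
  LinearIsometryEquiv.piLpCongrRight 2
    (fun i : Fin n => if i = 0 then LinearIsometryEquiv.neg ℝ else LinearIsometryEquiv.refl ℝ ℝ)

lemma negFirst_apply (x : En n) (i : Fin n) :
    negFirst n x i = if i = 0 then -x 0 else x i := by
  rw [negFirst, LinearIsometryEquiv.piLpCongrRight_apply]
  rcases eq_or_ne i 0 with h | h <;> simp [h]

def shiftVec (n : ℕ) [NeZero n] (l : ℝ) : En n := WithLp.toLp 2 fun i : Fin n => if i = 0 then 2*l else 0

lemma reflPt_eq (x : En n) : reflPt n l x = shiftVec n l + negFirst n x := by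
  ext i
  rw [PiLp.add_apply, negFirst_apply]
  rcases eq_or_ne i 0 with h | h
  · subst h; rw [reflPt_apply_zero]; simp [shiftVec]; ring
  · rw [reflPt_apply_ne _ h]; simp [shiftVec, h]

lemma measurePreserving_reflPt : MeasurePreserving (reflPt n l) (volume) (volume) := by
  have h1 : MeasurePreserving (fun x : En n => negFirst n x) volume volume :=
    (negFirst n).measurePreserving
  have h2 : MeasurePreserving (fun y : En n => shiftVec n l + y) volume volume :=
    measurePreserving_add_left volume _
  have h3 := h2.comp h1
  convert h3 using 1
  funext x
  exact reflPt_eq x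

lemma continuous_reflPt : Continuous (reflPt n l) := by
  have h : Continuous (fun y : En n => shiftVec n l + negFirst n y) :=
    continuous_const.add (negFirst n).continuous
  convert h using 1
  funext x; exact reflPt_eq x

def reflHomeo (n : ℕ) [NeZero n] (l : ℝ) : En n ≃ₜ En n where
  toFun := reflPt n l
  invFun := reflPt n l
  left_inv := reflPt_invol
  right_inv := reflPt_invol
  continuous_toFun := continuous_reflPt
  continuous_invFun := continuous_reflPt

lemma measurableEmbedding_reflPt : MeasurableEmbedding (reflPt n l) :=
  (reflHomeo n l).measurableEmbedding

lemma dist_reflPt_left (x y : En n) : dist (reflPt n l x) y = dist x (reflPt n l y) := by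
  conv_lhs => rw [← reflPt_invol (l := l) y]
  rw [dist_reflPt]

lemma dist_lt_dist_reflPt {x y : En n} (hx : x 0 < l) (hy : y 0 < l) :
    dist x y < dist (reflPt n l x) y := by
  have key : ∀ i : Fin n, dist (x i) (y i) ^ 2 ≤ dist (reflPt n l x i) (y i) ^ 2 := by
    intro i
    rcases eq_or_ne i 0 with h | h
    · subst h
      rw [reflPt_apply_zero, Real.dist_eq, Real.dist_eq]
      have h1 : |x 0 - y 0| ≤ |2 * l - x 0 - y 0| := by
        rw [abs_of_pos (by linarith : (0:ℝ) < 2*l - x 0 - y 0), abs_le]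
        constructor <;> linarith
      exact pow_le_pow_left₀ (abs_nonneg _) h1 2
    · rw [reflPt_apply_ne _ h]
  have key0 : dist (x 0) (y 0) ^ 2 < dist (reflPt n l x 0) (y 0) ^ 2 := by
    rw [reflPt_apply_zero, Real.dist_eq, Real.dist_eq]
    have h1 : |x 0 - y 0| < |2 * l - x 0 - y 0| := by
      rw [abs_of_pos (by linarith : (0:ℝ) < 2*l - x 0 - y 0), abs_lt]
      constructor <;> linarith
    exact pow_lt_pow_left₀ h1 (abs_nonneg _) (by norm_num)
  rw [EuclideanSpace.dist_eq, EuclideanSpace.dist_eq]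
  apply Real.sqrt_lt_sqrt (by positivity)
  exact Finset.sum_lt_sum (fun i _ => key i) ⟨0, Finset.mem_univ _, key0⟩
variable {n : ℕ} {σ : ℝ} {w : En n → ℝ}

lemma weight_int (hσ : 0 < σ) :
    Integrable (fun y : En n => (1+‖y‖) ^ (-((n:ℝ)+σ))) volume := by
  apply integrable_one_add_norm
  rw [finrank_euclideanSpace_fin]
  linarith

lemma continuous_kernel (hσ : 0 < σ) (z : En n) :
    Continuous (fun y : En n => dist z y ^ ((n:ℝ)+σ)) :=
  (Real.continuous_rpow_const (by positivity)).comp (continuous_const.dist continuous_id)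

lemma kernel_bound (hσ : 0 < σ) (z : En n) {ε : ℝ} (hε : 0 < ε) {y : En n}
    (hy : ε ≤ dist z y) :
    1 / dist z y ^ ((n:ℝ)+σ) ≤ ((1+‖z‖)/ε + 1) ^ ((n:ℝ)+σ) * (1+‖y‖) ^ (-((n:ℝ)+σ)) := by
  set r : ℝ := (n:ℝ)+σ with hr
  have hrpos : 0 < r := by positivity
  have hdp : 0 < dist z y := lt_of_lt_of_le hε hy
  have h1 : 1 + ‖y‖ ≤ ((1+‖z‖)/ε + 1) * dist z y := by
    have hny : ‖y‖ ≤ ‖z‖ + dist z y := by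
      calc ‖y‖ = dist y 0 := by simp
        _ ≤ dist y z + dist z 0 := dist_triangle _ _ _
        _ = ‖z‖ + dist z y := by rw [dist_comm y z]; simp [add_comm]
    have h2 : 1 + ‖z‖ ≤ (1+‖z‖)/ε * dist z y := by
      rw [div_mul_eq_mul_div, le_div_iff₀ hε]
      have : 0 ≤ 1 + ‖z‖ := by positivity
      nlinarith
    calc 1 + ‖y‖ ≤ 1 + ‖z‖ + dist z y := by linarith
      _ ≤ (1+‖z‖)/ε * dist z y + dist z y := by linarith
      _ = ((1+‖z‖)/ε + 1) * dist z y := by ring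
  have h2 : (1+‖y‖) ^ r ≤ ((1+‖z‖)/ε + 1) ^ r * dist z y ^ r := by
    rw [← Real.mul_rpow (by positivity) hdp.le]
    exact Real.rpow_le_rpow (by positivity) h1 hrpos.le
  have hd : 0 < dist z y ^ r := Real.rpow_pos_of_pos hdp r
  have hy' : 0 < (1+‖y‖) ^ r := Real.rpow_pos_of_pos (by positivity) r
  rw [Real.rpow_neg (by positivity), ← div_eq_mul_inv, div_le_div_iff₀ hd hy', one_mul]
  exact h2

lemma weight_comp (hσ : 0 < σ) (y : En n) :
    (1+‖y‖) ^ (-((n:ℝ)+σ)) ≤ 2 * (1 / (1+‖y‖ ^ ((n:ℝ)+σ))) := by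
  set r : ℝ := (n:ℝ)+σ with hr
  have hrpos : 0 < r := by positivity
  have h1 : (1:ℝ) ≤ (1+‖y‖) ^ r := Real.one_le_rpow (by linarith [norm_nonneg y]) hrpos.le
  have h2 : ‖y‖ ^ r ≤ (1+‖y‖) ^ r := Real.rpow_le_rpow (norm_nonneg y) (by linarith) hrpos.le
  have hy' : 0 < (1+‖y‖) ^ r := by linarith
  have hd : 0 < 1 + ‖y‖ ^ r := by
    have := Real.rpow_nonneg (norm_nonneg y) r; linarith
  rw [Real.rpow_neg (by positivity), ← one_div, mul_one_div, div_le_div_iff₀ hy' hd, one_mul]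
  linarith

lemma measurableSet_annulus (z : En n) (ε : ℝ) :
    MeasurableSet {y : En n | ε ≤ dist z y} :=
  (isClosed_le continuous_const (continuous_const.dist continuous_id)).measurableSet

lemma intOn_kernel (hσ : 0 < σ) (z : En n) {ε : ℝ} (hε : 0 < ε) :
    IntegrableOn (fun y : En n => 1 / dist z y ^ ((n:ℝ)+σ)) {y | ε ≤ dist z y} volume := by
  apply Integrable.mono'
    (((weight_int hσ).const_mul (((1+‖z‖)/ε + 1) ^ ((n:ℝ)+σ))).integrableOn)
  · exact (measurable_const.div (continuous_kernel hσ z).measurable).aestronglyMeasurable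
  · rw [ae_restrict_iff' (measurableSet_annulus z ε)]
    refine Filter.Eventually.of_forall fun y hy => ?_
    rw [Real.norm_eq_abs, abs_of_nonneg (by positivity)]
    exact kernel_bound hσ z hε hy

lemma intOn_w_kernel (hσ : 0 < σ)
    (hw : Integrable (fun y : En n => |w y| / (1 + ‖y‖ ^ ((n:ℝ)+σ))) volume)
    (hwc : Continuous w) (z : En n) {ε : ℝ} (hε : 0 < ε) :
    IntegrableOn (fun y : En n => w y / dist z y ^ ((n:ℝ)+σ)) {y | ε ≤ dist z y} volume := by
  set r : ℝ := (n:ℝ)+σ with hr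
  set C : ℝ := ((1+‖z‖)/ε + 1) ^ r with hC
  have hC0 : 0 ≤ C := Real.rpow_nonneg (by positivity) r
  apply Integrable.mono' ((hw.const_mul (2*C)).integrableOn)
  · exact (hwc.measurable.div (continuous_kernel hσ z).measurable).aestronglyMeasurable
  · rw [ae_restrict_iff' (measurableSet_annulus z ε)]
    refine Filter.Eventually.of_forall fun y hy => ?_
    have hd0 : (0:ℝ) ≤ dist z y ^ r := Real.rpow_nonneg dist_nonneg r
    calc ‖w y / dist z y ^ r‖ = |w y| * (1 / dist z y ^ r) := by
          rw [Real.norm_eq_abs, abs_div, abs_of_nonneg hd0]; ring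
      _ ≤ |w y| * (C * (1+‖y‖) ^ (-r)) :=
          mul_le_mul_of_nonneg_left (kernel_bound hσ z hε hy) (abs_nonneg _)
      _ ≤ |w y| * (C * (2 * (1 / (1+‖y‖ ^ r)))) :=
          mul_le_mul_of_nonneg_left
            (mul_le_mul_of_nonneg_left (weight_comp hσ y) hC0) (abs_nonneg _)
      _ = 2*C * (|w y| / (1+‖y‖ ^ r)) := by ring

lemma intOn_sub_kernel (hσ : 0 < σ)
    (hw : Integrable (fun y : En n => |w y| / (1 + ‖y‖ ^ ((n:ℝ)+σ))) volume)
    (hwc : Continuous w) (a : ℝ) (z : En n) {ε : ℝ} (hε : 0 < ε) :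
    IntegrableOn (fun y : En n => (a - w y) / dist z y ^ ((n:ℝ)+σ)) {y | ε ≤ dist z y} volume := by
  have h : (fun y : En n => (a - w y) / dist z y ^ ((n:ℝ)+σ))
      = fun y => a * (1 / dist z y ^ ((n:ℝ)+σ)) - w y / dist z y ^ ((n:ℝ)+σ) := by
    funext y; ring
  rw [h]
  exact ((intOn_kernel hσ z hε).const_mul a).sub (intOn_w_kernel hσ hw hwc z hε)

lemma continuous_coord0 [NeZero n] : Continuous (fun y : En n => y 0) := (continuous_apply 0).comp (PiLp.continuous_ofLp 2 _)

lemma keyLemma (n : ℕ) [NeZero n] {σ c l : ℝ} (hσ : 0 < σ) (hc : 0 < c)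
    {w : En n → ℝ} (hwc : Continuous w)
    (hw : Integrable (fun y : En n => |w y| / (1 + ‖y‖ ^ ((n:ℝ)+σ))) volume)
    {xt : En n} (hxt : xt 0 < l)
    (hW0 : w (reflPt n l xt) = w xt)
    (hWnn : ∀ y : En n, y 0 < l → w y ≤ w (reflPt n l y))
    {Lx LT : ℝ}
    (hLx : HasFracLap n σ c w xt Lx) (hLT : HasFracLap n σ c w (reflPt n l xt) LT)
    (hLle : Lx ≤ LT) :
    (∀ y, w (reflPt n l y) = w y) ∧ Lx = LT := by
  have hrpos : (0:ℝ) < (n:ℝ) + σ := by positivity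
  -- notation
  set T : En n → En n := reflPt n l with hT
  set W : En n → ℝ := fun y => w (T y) - w y with hWdef
  set S : Set (En n) := {y : En n | y 0 < l} with hSdef
  set S' : Set (En n) := {y : En n | l < y 0} with hS'def
  set A₁ : ℝ → Set (En n) := fun ε => {y : En n | ε ≤ dist xt y} with hA₁
  set A₂ : ℝ → Set (En n) := fun ε => {y : En n | ε ≤ dist (T xt) y} with hA₂
  set g1 : En n → ℝ := fun y => W y / dist xt y ^ ((n:ℝ)+σ) with hg1
  set g2 : En n → ℝ := fun y => W y / dist (T xt) y ^ ((n:ℝ)+σ) with hg2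
  set g : En n → ℝ := fun y => g1 y - g2 y with hg
  have hSmeas : MeasurableSet S := measurableSet_lt continuous_coord0.measurable measurable_const
  have hS'meas : MeasurableSet S' := measurableSet_lt measurable_const continuous_coord0.measurable
  have hSopen : IsOpen S := isOpen_lt continuous_coord0 continuous_const
  have hWcont : Continuous W := (hwc.comp continuous_reflPt).sub hwc
  have hWanti : ∀ y, W (T y) = - W y := by
    intro y; simp only [hWdef, hT]; rw [reflPt_invol]; ring
  have hWxt : W xt = 0 := by simp only [hWdef, hT, hW0, sub_self]; exact sub_eq_zero.2 hW0
  have hd12 : ∀ y ∈ S, dist xt y < dist (T xt) y := fun y hy => dist_lt_dist_reflPt hxt hy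
  have hWS : ∀ y ∈ S, 0 ≤ W y := fun y hy => sub_nonneg.2 (hWnn y hy)
  -- preimage identities
  have hpre1 : ∀ ε, T ⁻¹' (A₂ ε) = A₁ ε := by
    intro ε; ext y
    simp only [hA₁, hA₂, mem_preimage, mem_setOf_eq, hT, dist_reflPt]
  have hpre2 : ∀ ε, T ⁻¹' (A₁ ε) = A₂ ε := by
    intro ε; ext y
    simp only [hA₁, hA₂, mem_preimage, mem_setOf_eq, hT, ← dist_reflPt_left]
  have hpreS' : T ⁻¹' S' = S := by
    ext y
    simp only [hS'def, hSdef, mem_preimage, mem_setOf_eq, hT, reflPt_apply_zero]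
    constructor <;> intro h <;> linarith
  -- integrability
  have int_f1 : ∀ ε : ℝ, 0 < ε → IntegrableOn
      (fun y => (w xt - w y) / dist xt y ^ ((n:ℝ)+σ)) (A₁ ε) volume :=
    fun ε hε => intOn_sub_kernel hσ hw hwc (w xt) xt hε
  have int_f2 : ∀ ε : ℝ, 0 < ε → IntegrableOn
      (fun y => (w (T xt) - w y) / dist (T xt) y ^ ((n:ℝ)+σ)) (A₂ ε) volume :=
    fun ε hε => intOn_sub_kernel hσ hw hwc (w (T xt)) (T xt) hε
  have int_F2T : ∀ ε : ℝ, 0 < ε → IntegrableOn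
      (fun y => (w xt - w (T y)) / dist xt y ^ ((n:ℝ)+σ)) (A₁ ε) volume := by
    intro ε hε
    have h := ((measurePreserving_reflPt (l := l)).integrableOn_comp_preimage
      (measurableEmbedding_reflPt (l := l))).2 (int_f2 ε hε)
    rw [hpre1 ε] at h
    refine h.congr_fun ?_ (measurableSet_annulus xt ε)
    intro y _
    show (w (T xt) - w (T y)) / dist (T xt) (T y) ^ ((n:ℝ)+σ) = _
    rw [hT, dist_reflPt, hW0]
  have int_F1T : ∀ ε : ℝ, 0 < ε → IntegrableOn
      (fun y => (w (T xt) - w (T y)) / dist (T xt) y ^ ((n:ℝ)+σ)) (A₂ ε) volume := by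
    intro ε hε
    have base : IntegrableOn
        (fun z => (w (T xt) - w z) / dist xt z ^ ((n:ℝ)+σ)) (A₁ ε) volume :=
      intOn_sub_kernel hσ hw hwc (w (T xt)) xt hε
    have h := ((measurePreserving_reflPt (l := l)).integrableOn_comp_preimage
      (measurableEmbedding_reflPt (l := l))).2 base
    rw [hpre2 ε] at h
    refine h.congr_fun ?_ (measurableSet_annulus (T xt) ε)
    intro y _
    show (w (T xt) - w (T y)) / dist xt (T y) ^ ((n:ℝ)+σ) = _
    rw [← dist_reflPt_left]
  have int_g1 : ∀ ε : ℝ, 0 < ε → IntegrableOn g1 (A₁ ε) volume := by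
    intro ε hε
    have h : IntegrableOn (fun y => (w xt - w y) / dist xt y ^ ((n:ℝ)+σ)
        - (w xt - w (T y)) / dist xt y ^ ((n:ℝ)+σ)) (A₁ ε) volume :=
      (int_f1 ε hε).sub (int_F2T ε hε)
    refine h.congr_fun ?_ (measurableSet_annulus xt ε)
    intro y _
    show (w xt - w y) / dist xt y ^ ((n:ℝ)+σ)
        - (w xt - w (T y)) / dist xt y ^ ((n:ℝ)+σ) = g1 y
    simp only [hg1, hWdef]
    ring
  have int_g2 : ∀ ε : ℝ, 0 < ε → IntegrableOn g2 (A₂ ε) volume := by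
    intro ε hε
    have h : IntegrableOn (fun y => (w (T xt) - w y) / dist (T xt) y ^ ((n:ℝ)+σ)
        - (w (T xt) - w (T y)) / dist (T xt) y ^ ((n:ℝ)+σ)) (A₂ ε) volume :=
      (int_f2 ε hε).sub (int_F1T ε hε)
    refine h.congr_fun ?_ (measurableSet_annulus (T xt) ε)
    intro y _
    show (w (T xt) - w y) / dist (T xt) y ^ ((n:ℝ)+σ)
        - (w (T xt) - w (T y)) / dist (T xt) y ^ ((n:ℝ)+σ) = g2 y
    simp only [hg2, hWdef]
    ring
  -- Step A: difference of the two principal value integrals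
  have hΦ : ∀ ε : ℝ, 0 < ε →
      (∫ y in A₁ ε, (w xt - w y) / dist xt y ^ ((n:ℝ)+σ))
        - (∫ y in A₂ ε, (w (T xt) - w y) / dist (T xt) y ^ ((n:ℝ)+σ))
      = ∫ y in A₁ ε, g1 y := by
    intro ε hε
    have hrev : (∫ y in A₂ ε, (w (T xt) - w y) / dist (T xt) y ^ ((n:ℝ)+σ))
        = ∫ y in A₁ ε, (w xt - w (T y)) / dist xt y ^ ((n:ℝ)+σ) := by
      rw [← (measurePreserving_reflPt (l := l)).setIntegral_preimage_emb
        (measurableEmbedding_reflPt (l := l))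
        (fun y => (w (T xt) - w y) / dist (T xt) y ^ ((n:ℝ)+σ)) (A₂ ε), hpre1 ε]
      refine integral_congr_ae (ae_of_all _ fun y => ?_)
      show (w (T xt) - w (reflPt n l y)) / dist (T xt) (reflPt n l y) ^ ((n:ℝ)+σ) = _
      rw [hT, dist_reflPt, hW0]
    rw [hrev, ← integral_sub (int_f1 ε hε) (int_F2T ε hε)]
    refine integral_congr_ae (ae_of_all _ fun y => ?_)
    show (w xt - w y) / dist xt y ^ ((n:ℝ)+σ)
        - (w xt - w (T y)) / dist xt y ^ ((n:ℝ)+σ) = g1 y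
    simp only [hg1, hWdef]
    ring
  -- Step B: splitting the integral over the half spaces
  have hsplit : ∀ ε : ℝ, 0 < ε →
      (∫ y in A₁ ε, g1 y)
        = (∫ y in A₁ ε ∩ S, g1 y) - ∫ y in S ∩ A₂ ε, g2 y := by
    intro ε hε
    have e1 := integral_inter_add_diff (μ := volume) (f := g1) (s := A₁ ε) (t := S)
      hSmeas (int_g1 ε hε)
    have e2 := integral_inter_add_diff (μ := volume) (f := g1) (s := A₁ ε \ S) (t := S')
      hS'meas ((int_g1 ε hε).mono_set diff_subset)
    have hplane : (∫ y in (A₁ ε \ S) \ S', g1 y) = 0 := by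
      apply setIntegral_eq_zero_of_forall_eq_zero
      intro y hy
      rcases hy with ⟨⟨_, h1⟩, h2⟩
      simp only [hSdef, mem_setOf_eq, not_lt] at h1
      simp only [hS'def, mem_setOf_eq, not_lt] at h2
      have h0 : y 0 = l := le_antisymm h2 h1
      have hTy : T y = y := by
        rw [hT]; ext i
        rcases eq_or_ne i 0 with hi | hi
        · subst hi; rw [reflPt_apply_zero, h0]; ring
        · rw [reflPt_apply_ne _ hi]
      simp only [hg1, hWdef, hTy, sub_self, zero_div]
    have hset : (A₁ ε \ S) ∩ S' = A₁ ε ∩ S' := by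
      ext y
      simp only [mem_inter_iff, mem_diff, hSdef, hS'def, mem_setOf_eq]
      constructor
      · rintro ⟨⟨h1, _⟩, h2⟩; exact ⟨h1, h2⟩
      · rintro ⟨h1, h2⟩; exact ⟨⟨h1, by simp only [not_lt]; linarith⟩, h2⟩
    have hrefl : (∫ y in A₁ ε ∩ S', g1 y) = - ∫ y in S ∩ A₂ ε, g2 y := by
      have hps : T ⁻¹' (A₁ ε ∩ S') = S ∩ A₂ ε := by
        rw [preimage_inter, hpre2 ε, hpreS']; exact inter_comm _ _
      rw [← (measurePreserving_reflPt (l := l)).setIntegral_preimage_emb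
        (measurableEmbedding_reflPt (l := l)) g1 (A₁ ε ∩ S')]
      rw [show reflPt n l ⁻¹' (A₁ ε ∩ S') = S ∩ A₂ ε from hps, ← integral_neg]
      refine integral_congr_ae (ae_of_all _ fun y => ?_)
      show g1 (reflPt n l y) = - g2 y
      simp only [hg1, hg2]
      rw [show reflPt n l y = T y from rfl, hWanti y, hT, ← dist_reflPt_left]
      ring
    rw [hset, hrefl] at e2
    linarith
  -- Step C: the limit
  have htends : Tendsto (fun ε => (∫ y in A₁ ε ∩ S, g1 y) - ∫ y in S ∩ A₂ ε, g2 y)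
      (nhdsWithin 0 (Ioi 0)) (nhds ((Lx - LT)/c)) := by
    have h1 : Tendsto (fun ε : ℝ =>
        (c * ∫ y in A₁ ε, (w xt - w y) / dist xt y ^ ((n:ℝ)+σ))
          - c * ∫ y in A₂ ε, (w (T xt) - w y) / dist (T xt) y ^ ((n:ℝ)+σ))
        (nhdsWithin 0 (Ioi 0)) (nhds (Lx - LT)) := hLx.sub hLT
    have h2 := h1.div_const c
    refine h2.congr' ?_
    filter_upwards [self_mem_nhdsWithin] with ε (hε : (0:ℝ) < ε)
    have e : (c * ∫ y in A₁ ε, (w xt - w y) / dist xt y ^ ((n:ℝ)+σ))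
          - c * (∫ y in A₂ ε, (w (T xt) - w y) / dist (T xt) y ^ ((n:ℝ)+σ))
        = c * ((∫ y in A₁ ε, (w xt - w y) / dist xt y ^ ((n:ℝ)+σ))
          - ∫ y in A₂ ε, (w (T xt) - w y) / dist (T xt) y ^ ((n:ℝ)+σ)) := by ring
    rw [e, mul_div_cancel_left₀ _ (ne_of_gt hc), hΦ ε hε, hsplit ε hε]
  -- Step D: splitting and bounds
  have hsubset12 : ∀ ε : ℝ, A₁ ε ∩ S ⊆ S ∩ A₂ ε := by
    intro ε y hy
    exact ⟨hy.2, le_of_lt (lt_of_le_of_lt hy.1 (hd12 y hy.2))⟩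
  have int_g2S2 : ∀ ε : ℝ, 0 < ε → IntegrableOn g2 (S ∩ A₂ ε) volume :=
    fun ε hε => (int_g2 ε hε).mono_set inter_subset_right
  have int_g2S1 : ∀ ε : ℝ, 0 < ε → IntegrableOn g2 (A₁ ε ∩ S) volume :=
    fun ε hε => (int_g2 ε hε).mono_set fun y hy => (hsubset12 ε hy).2
  have int_gS : ∀ ε : ℝ, 0 < ε → IntegrableOn g (A₁ ε ∩ S) volume := by
    intro ε hε
    have h : IntegrableOn (fun y => g1 y - g2 y) (A₁ ε ∩ S) volume :=
      ((int_g1 ε hε).mono_set inter_subset_left).sub (int_g2S1 ε hε)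
    exact h
  have hg2nn : ∀ y ∈ S, 0 ≤ g2 y := fun y hy =>
    div_nonneg (hWS y hy) (Real.rpow_nonneg dist_nonneg _)
  have hgnn : ∀ ε : ℝ, 0 < ε → ∀ y ∈ A₁ ε ∩ S, 0 ≤ g y := by
    intro ε hε y hy
    rcases hy with ⟨h1, h2⟩
    have hWy : 0 ≤ W y := hWS y h2
    have hd1 : 0 < dist xt y := lt_of_lt_of_le hε h1
    have hd1r : 0 < dist xt y ^ ((n:ℝ)+σ) := Real.rpow_pos_of_pos hd1 _
    have hdle : dist xt y ^ ((n:ℝ)+σ) ≤ dist (T xt) y ^ ((n:ℝ)+σ) :=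
      Real.rpow_le_rpow dist_nonneg (hd12 y h2).le hrpos.le
    have hle : W y / dist (T xt) y ^ ((n:ℝ)+σ) ≤ W y / dist xt y ^ ((n:ℝ)+σ) :=
      div_le_div_of_nonneg_left hWy hd1r hdle
    simp only [hg, hg1, hg2]
    linarith
  have hmeasA1S : ∀ ε : ℝ, MeasurableSet (A₁ ε ∩ S) :=
    fun ε => (measurableSet_annulus xt ε).inter hSmeas
  have hI1 : ∀ ε : ℝ, 0 < ε → (∫ y in A₁ ε ∩ S, g1 y)
      = (∫ y in A₁ ε ∩ S, g y) + ∫ y in A₁ ε ∩ S, g2 y := by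
    intro ε hε
    rw [← integral_add (int_gS ε hε) (int_g2S1 ε hε)]
    refine integral_congr_ae (ae_of_all _ fun y => ?_)
    show g1 y = g y + g2 y
    simp only [hg]; ring
  -- the boundary strip
  set Rs : ℝ → Set (En n) := fun ε => (S ∩ A₂ ε) \ A₁ ε with hRs
  have hRmeas : ∀ ε : ℝ, MeasurableSet (Rs ε) :=
    fun ε => (hSmeas.inter (measurableSet_annulus (T xt) ε)).diff (measurableSet_annulus xt ε)
  have hI2split : ∀ ε : ℝ, 0 < ε → (∫ y in S ∩ A₂ ε, g2 y)
      = (∫ y in A₁ ε ∩ S, g2 y) + ∫ y in Rs ε, g2 y := by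
    intro ε hε
    have e := integral_inter_add_diff (μ := volume) (f := g2) (s := S ∩ A₂ ε)
      (t := A₁ ε) (measurableSet_annulus xt ε) (int_g2S2 ε hε)
    have hseteq : (S ∩ A₂ ε) ∩ A₁ ε = A₁ ε ∩ S := by
      ext y
      constructor
      · rintro ⟨⟨h1, _⟩, h3⟩; exact ⟨h3, h1⟩
      · rintro ⟨h1, h2⟩; exact ⟨⟨h2, (hsubset12 ε ⟨h1, h2⟩).2⟩, h1⟩
    rw [hseteq] at e
    linarith
  -- bound on the strip integral
  obtain ⟨M, hM⟩ := (isCompact_closedBall xt 1).exists_bound_of_continuousOn hWcont.continuousOn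
  have hM0 : 0 ≤ M := le_trans (norm_nonneg (W xt)) (hM xt (mem_closedBall_self zero_le_one))
  have hδ : 0 < l - xt 0 := sub_pos.2 hxt
  have hδr : 0 < (l - xt 0) ^ ((n:ℝ)+σ) := Real.rpow_pos_of_pos hδ _
  have hC0 : 0 ≤ M / (l - xt 0) ^ ((n:ℝ)+σ) := div_nonneg hM0 hδr.le
  have hdTxt : dist (T xt) xt = 2 * (l - xt 0) := by
    rw [hT, dist_reflPt_self, abs_of_pos (by linarith)]
    ring
  have hRbound : ∀ ε : ℝ, 0 < ε → ε ≤ min 1 (l - xt 0) →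
      (∫ y in Rs ε, g2 y) ≤ (M / (l - xt 0) ^ ((n:ℝ)+σ)) * (volume (ball xt ε)).toReal := by
    intro ε hε hεle
    have hsubball : Rs ε ⊆ ball xt ε := by
      intro y hy
      have h1 : ¬ (ε ≤ dist xt y) := hy.2
      rw [mem_ball, dist_comm]
      exact not_le.1 h1
    have hbd : ∀ y ∈ Rs ε, ‖g2 y‖ ≤ M / (l - xt 0) ^ ((n:ℝ)+σ) := by
      intro y hy
      obtain ⟨⟨hyS, _⟩, hyA⟩ := hy
      have hd1 : dist xt y < ε := not_le.1 hyA
      have hεδ : ε ≤ l - xt 0 := le_trans hεle (min_le_right _ _)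
      have hd2 : l - xt 0 ≤ dist (T xt) y := by
        have htri := dist_triangle (T xt) y xt
        rw [hdTxt] at htri
        have hyx : dist y xt < ε := by rw [dist_comm]; exact hd1
        linarith
      have hWle : W y ≤ M := by
        have hy1 : y ∈ closedBall xt 1 := by
          rw [mem_closedBall, dist_comm]
          have h1' : ε ≤ 1 := le_trans hεle (min_le_left _ _)
          linarith
        have := hM y hy1
        rw [Real.norm_eq_abs] at this
        exact le_trans (le_abs_self _) this
      have hWnn' : 0 ≤ W y := hWS y hyS
      have hd2r : (l - xt 0) ^ ((n:ℝ)+σ) ≤ dist (T xt) y ^ ((n:ℝ)+σ) :=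
        Real.rpow_le_rpow hδ.le hd2 hrpos.le
      have hd2rpos : 0 < dist (T xt) y ^ ((n:ℝ)+σ) := lt_of_lt_of_le hδr hd2r
      have hg2y : g2 y ≤ M / (l - xt 0) ^ ((n:ℝ)+σ) := by
        simp only [hg2]
        calc W y / dist (T xt) y ^ ((n:ℝ)+σ) ≤ M / dist (T xt) y ^ ((n:ℝ)+σ) :=
              (div_le_div_iff_of_pos_right hd2rpos).2 hWle
          _ ≤ M / (l - xt 0) ^ ((n:ℝ)+σ) := div_le_div_of_nonneg_left hM0 hδr hd2r
      rw [Real.norm_eq_abs, abs_of_nonneg (hg2nn y hyS)]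
      exact hg2y
    have hvol : volume (Rs ε) < ⊤ := lt_of_le_of_lt (measure_mono hsubball) measure_ball_lt_top
    have hnorm := norm_setIntegral_le_of_norm_le_const hvol hbd
    rw [Real.norm_eq_abs] at hnorm
    calc (∫ y in Rs ε, g2 y) ≤ |∫ y in Rs ε, g2 y| := le_abs_self _
      _ ≤ (M / (l - xt 0) ^ ((n:ℝ)+σ)) * (volume (Rs ε)).toReal := hnorm
      _ ≤ (M / (l - xt 0) ^ ((n:ℝ)+σ)) * (volume (ball xt ε)).toReal := by
          exact mul_le_mul_of_nonneg_left
            (ENNReal.toReal_mono measure_ball_lt_top.ne (measure_mono hsubball)) hC0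
  have hvol_tendsto : Tendsto
      (fun ε : ℝ => (M / (l - xt 0) ^ ((n:ℝ)+σ)) * (volume (ball xt ε)).toReal)
      (nhdsWithin 0 (Ioi 0)) (nhds 0) := by
    have h2 : Tendsto (fun ε : ℝ => (M / (l - xt 0) ^ ((n:ℝ)+σ))
        * (ε ^ n * (volume (ball (0 : En n) 1)).toReal))
        (nhdsWithin 0 (Ioi 0)) (nhds 0) := by
      have h3 : Tendsto (fun ε : ℝ => (M / (l - xt 0) ^ ((n:ℝ)+σ))
          * (ε ^ n * (volume (ball (0 : En n) 1)).toReal)) (nhds 0)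
          (nhds ((M / (l - xt 0) ^ ((n:ℝ)+σ)) * ((0:ℝ) ^ n * (volume (ball (0 : En n) 1)).toReal))) :=
        (continuous_const.mul ((continuous_pow n).mul continuous_const)).tendsto 0
      rw [zero_pow (NeZero.ne n), zero_mul, mul_zero] at h3
      exact h3.mono_left nhdsWithin_le_nhds
    refine h2.congr' ?_
    filter_upwards [self_mem_nhdsWithin] with ε (hε : (0:ℝ) < ε)
    rw [Measure.addHaar_ball volume xt hε.le, ENNReal.toReal_mul,
      ENNReal.toReal_ofReal (by positivity), finrank_euclideanSpace_fin]
  have hRtendsto : Tendsto (fun ε : ℝ => ∫ y in Rs ε, g2 y)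
      (nhdsWithin 0 (Ioi 0)) (nhds 0) := by
    refine squeeze_zero' ?_ ?_ hvol_tendsto
    · filter_upwards [self_mem_nhdsWithin] with ε (hε : (0:ℝ) < ε)
      exact setIntegral_nonneg (hRmeas ε) fun y hy => hg2nn y hy.1.1
    · filter_upwards [Ioc_mem_nhdsGT_of_mem ⟨le_refl (0:ℝ), lt_min one_pos hδ⟩] with ε hε
      exact hRbound ε hε.1 hε.2
  -- Step E: J = 0 and Lx = LT
  have hub : ∀ ε₀ : ℝ, 0 < ε₀ → ∀ ε ∈ Ioc (0:ℝ) ε₀,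
      (∫ y in A₁ ε₀ ∩ S, g y)
        ≤ ((∫ y in A₁ ε ∩ S, g1 y) - ∫ y in S ∩ A₂ ε, g2 y) + ∫ y in Rs ε, g2 y := by
    intro ε₀ hε₀ ε hε
    obtain ⟨hε0, hεle⟩ := hε
    have hI1e := hI1 ε hε0
    have hI2e := hI2split ε hε0
    have hm1 : (∫ y in A₁ ε₀ ∩ S, g y) ≤ ∫ y in A₁ ε ∩ S, g y := by
      refine setIntegral_mono_set (int_gS ε hε0)
        ((ae_restrict_iff' (hmeasA1S ε)).2 (ae_of_all _ fun y hy => hgnn ε hε0 y hy))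
        (HasSubset.Subset.eventuallyLE fun y hy => ⟨le_trans hεle hy.1, hy.2⟩)
    linarith
  have hJle : ∀ ε₀ : ℝ, 0 < ε₀ → (∫ y in A₁ ε₀ ∩ S, g y) ≤ (Lx - LT)/c := by
    intro ε₀ hε₀
    have htends2 : Tendsto (fun ε : ℝ =>
        ((∫ y in A₁ ε ∩ S, g1 y) - ∫ y in S ∩ A₂ ε, g2 y) + ∫ y in Rs ε, g2 y)
        (nhdsWithin 0 (Ioi 0)) (nhds ((Lx - LT)/c + 0)) := htends.add hRtendsto
    rw [add_zero] at htends2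
    refine ge_of_tendsto htends2 ?_
    filter_upwards [Ioc_mem_nhdsGT_of_mem ⟨le_refl (0:ℝ), hε₀⟩] with ε hε
    exact hub ε₀ hε₀ ε hε
  have hJnn : ∀ ε₀ : ℝ, 0 < ε₀ → 0 ≤ ∫ y in A₁ ε₀ ∩ S, g y :=
    fun ε₀ h => setIntegral_nonneg (hmeasA1S ε₀) (hgnn ε₀ h)
  have hLeq : Lx = LT := by
    have h1 := le_trans (hJnn 1 one_pos) (hJle 1 one_pos)
    have h2 : 0 ≤ Lx - LT := by
      by_contra hcon
      push_neg at hcon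
      have : (Lx - LT)/c < 0 := div_neg_of_neg_of_pos (by linarith) hc
      linarith
    linarith
  have hJ0 : ∀ ε₀ : ℝ, 0 < ε₀ → (∫ y in A₁ ε₀ ∩ S, g y) = 0 := by
    intro ε₀ h
    refine le_antisymm (le_trans (hJle ε₀ h) ?_) (hJnn ε₀ h)
    rw [hLeq]; simp
  -- Step F: W vanishes on S
  have hae : ∀ k : ℕ, ∀ᵐ y : En n, y ∈ A₁ (1/((k:ℝ)+1)) ∩ S → W y = 0 := by
    intro k
    have hεk : (0:ℝ) < 1/((k:ℝ)+1) := by positivity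
    have h0 := (setIntegral_eq_zero_iff_of_nonneg_ae
      ((ae_restrict_iff' (hmeasA1S _)).2 (ae_of_all _ (hgnn _ hεk)))
      (int_gS _ hεk)).1 (hJ0 _ hεk)
    have h1 := (ae_restrict_iff' (hmeasA1S (1/((k:ℝ)+1)))).1 h0
    filter_upwards [h1] with y hy hmem
    have hgy : g y = 0 := hy hmem
    rcases hmem with ⟨hm1, hm2⟩
    by_contra hne
    have hWpos : 0 < W y := lt_of_le_of_ne (hWS y hm2) (Ne.symm hne)
    have hd1 : 0 < dist xt y := lt_of_lt_of_le hεk hm1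
    have hd1r : 0 < dist xt y ^ ((n:ℝ)+σ) := Real.rpow_pos_of_pos hd1 _
    have hdlt : dist xt y ^ ((n:ℝ)+σ) < dist (T xt) y ^ ((n:ℝ)+σ) :=
      Real.rpow_lt_rpow dist_nonneg (hd12 y hm2) hrpos
    have hlt : W y / dist (T xt) y ^ ((n:ℝ)+σ) < W y / dist xt y ^ ((n:ℝ)+σ) :=
      div_lt_div_of_pos_left hWpos hd1r hdlt
    simp only [hg, hg1, hg2] at hgy
    linarith
  have hnull : volume {y : En n | y ∈ S ∧ W y ≠ 0} = 0 := by
    have hsub : {y : En n | y ∈ S ∧ W y ≠ 0}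
        ⊆ ⋃ k : ℕ, {y : En n | ¬ (y ∈ A₁ (1/((k:ℝ)+1)) ∩ S → W y = 0)} := by
      intro y hy
      rcases hy with ⟨hyS, hyW⟩
      have hyx : y ≠ xt := by rintro rfl; exact hyW hWxt
      have hd : 0 < dist xt y := dist_pos.2 fun h => hyx h.symm
      obtain ⟨k, hk⟩ := exists_nat_one_div_lt hd
      refine mem_iUnion.2 ⟨k, ?_⟩
      simp only [mem_setOf_eq]
      intro hcon
      exact hyW (hcon ⟨le_of_lt hk, hyS⟩)
    exact measure_mono_null hsub (measure_iUnion_null fun k => ae_iff.1 (hae k))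
  have hWzeroS : ∀ z ∈ S, W z = 0 := by
    intro z hz
    by_contra hne
    have hWz : 0 < W z := lt_of_le_of_ne (hWS z hz) (Ne.symm hne)
    have hopen : IsOpen (S ∩ {y : En n | 0 < W y}) :=
      hSopen.inter (isOpen_lt continuous_const hWcont)
    obtain ⟨ρ, hρ, hball⟩ := Metric.isOpen_iff.1 hopen z ⟨hz, hWz⟩
    have hsubN : ball z ρ ⊆ {y : En n | y ∈ S ∧ W y ≠ 0} := by
      intro y hy
      obtain ⟨h1, h2⟩ := hball hy
      exact ⟨h1, ne_of_gt h2⟩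
    have h0 := measure_mono_null hsubN hnull
    exact absurd h0 (ne_of_gt (measure_ball_pos volume z hρ))
  -- conclusion
  refine ⟨fun y => ?_, hLeq⟩
  rcases lt_trichotomy (y 0) l with hy | hy | hy
  · have h := hWzeroS y hy
    simp only [hWdef] at h
    have : w (T y) = w y := by linarith
    exact this
  · have hTy : T y = y := by
      rw [hT]; ext i
      rcases eq_or_ne i 0 with hi | hi
      · subst hi; rw [reflPt_apply_zero, hy]; ring
      · rw [reflPt_apply_ne _ hi]
    rw [hTy]
  · have hTyS : (T y) 0 < l := by rw [hT, reflPt_apply_zero]; linarith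
    have h1 := hWzeroS (T y) hTyS
    rw [hWanti y] at h1
    have h2 : W y = 0 := by linarith
    simp only [hWdef] at h2
    have : w (T y) = w y := by linarith
    exact this

lemma continuous_of_C11 {n : ℕ} {w : En n → ℝ} (h : C11loc n w) : Continuous w := by
  rw [continuous_iff_continuousAt]
  intro x
  obtain ⟨ε, hε, K, _, hdiff, _⟩ := h x (mem_univ x)
  exact (hdiff x (mem_ball_self hε)).continuousAt

end AuxMovingPlane

/-- (Step 2 of the moving plane method: at the limiting
position, if `U_{λ₀}` or `V_{λ₀}` vanishes somewhere in `Σ_{λ₀}` while both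
are nonnegative there, then both vanish identically, i.e. `u` and `v` are
symmetric about `T_{λ₀}`). -/
theorem statement15
    (n : ℕ) [NeZero n] (hn : 2 ≤ n)
    (α β : ℝ) (hα : 0 < α ∧ α < 2) (hβ : 0 < β ∧ β < 2)
    (p : ℝ) (hp : 1 ≤ p)
    (cα cβ : ℝ) (hcα : 0 < cα) (hcβ : 0 < cβ)
    (u v : En n → ℝ)
    (hu_reg : C11loc n u) (hu_L : MemL n α u)
    (hv_reg : C11loc n v) (hv_L : MemL n β v)
    (hu_pos : ∀ x, 0 < u x) (hv_pos : ∀ x, 0 < v x)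
    (heq_u : ∀ x, HasFracLap n α cα u x (v x * u x ^ (p - 1) - u x))
    (heq_v : ∀ x, HasFracLap n β cβ v x (u x ^ p))
    (lam₀ : ℝ)
    (hnonneg : ∀ x ∈ halfSpace n lam₀,
      0 ≤ u (reflPt n lam₀ x) - u x ∧ 0 ≤ v (reflPt n lam₀ x) - v x)
    (hzero : (∃ xt ∈ halfSpace n lam₀, u (reflPt n lam₀ xt) - u xt = 0) ∨
      (∃ xt ∈ halfSpace n lam₀, v (reflPt n lam₀ xt) - v xt = 0)) :
    ∀ x : En n, u (reflPt n lam₀ x) = u x ∧ v (reflPt n lam₀ x) = v x := by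
  obtain ⟨hα0, hα2⟩ := hα
  obtain ⟨hβ0, hβ2⟩ := hβ
  have huc : Continuous u := continuous_of_C11 hu_reg
  have hvc : Continuous v := continuous_of_C11 hv_reg
  have hUnn : ∀ y : En n, y 0 < lam₀ → u y ≤ u (reflPt n lam₀ y) := by
    intro y hy
    have := (hnonneg y hy).1
    linarith
  have hVnn : ∀ y : En n, y 0 < lam₀ → v y ≤ v (reflPt n lam₀ y) := by
    intro y hy
    have := (hnonneg y hy).2
    linarith
  have hp0 : (0:ℝ) < p := by linarith
  rcases hzero with ⟨xt, hxt, hU0⟩ | ⟨xt, hxt, hV0⟩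
  · -- Case 1 : U vanishes at xt
    have hxt' : xt 0 < lam₀ := hxt
    have hW0u : u (reflPt n lam₀ xt) = u xt := by linarith
    have hAnn : (0:ℝ) ≤ u xt ^ (p - 1) := Real.rpow_nonneg (hu_pos xt).le _
    have hLleU : v xt * u xt ^ (p - 1) - u xt
        ≤ v (reflPt n lam₀ xt) * u (reflPt n lam₀ xt) ^ (p - 1) - u (reflPt n lam₀ xt) := by
      rw [hW0u]
      have h1 : v xt * u xt ^ (p - 1) ≤ v (reflPt n lam₀ xt) * u xt ^ (p - 1) :=
        mul_le_mul_of_nonneg_right (hVnn xt hxt') hAnn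
      linarith
    obtain ⟨hUsym, hLeqU⟩ := keyLemma n hα0 hcα huc hu_L.2 hxt' hW0u hUnn
      (heq_u xt) (heq_u (reflPt n lam₀ xt)) hLleU
    have hApos : (0:ℝ) < u xt ^ (p - 1) := Real.rpow_pos_of_pos (hu_pos xt) _
    have hVeq : v (reflPt n lam₀ xt) = v xt := by
      rw [hW0u] at hLeqU
      have h1 : v xt * u xt ^ (p - 1) = v (reflPt n lam₀ xt) * u xt ^ (p - 1) := by
        linarith
      exact (mul_right_cancel₀ (ne_of_gt hApos) h1.symm)
    have hLleV : u xt ^ p ≤ u (reflPt n lam₀ xt) ^ p := by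
      rw [hUsym xt]
    obtain ⟨hVsym, _⟩ := keyLemma n hβ0 hcβ hvc hv_L.2 hxt' hVeq hVnn
      (heq_v xt) (heq_v (reflPt n lam₀ xt)) hLleV
    exact fun x => ⟨hUsym x, hVsym x⟩
  · -- Case 2 : V vanishes at xt
    have hxt' : xt 0 < lam₀ := hxt
    have hW0v : v (reflPt n lam₀ xt) = v xt := by linarith
    have hLleV : u xt ^ p ≤ u (reflPt n lam₀ xt) ^ p :=
      Real.rpow_le_rpow (hu_pos xt).le (hUnn xt hxt') hp0.le
    obtain ⟨hVsym, hLeqV⟩ := keyLemma n hβ0 hcβ hvc hv_L.2 hxt' hW0v hVnn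
      (heq_v xt) (heq_v (reflPt n lam₀ xt)) hLleV
    have hUeq : u (reflPt n lam₀ xt) = u xt := by
      rcases lt_trichotomy (u xt) (u (reflPt n lam₀ xt)) with h | h | h
      · exfalso
        have := Real.rpow_lt_rpow (hu_pos xt).le h hp0
        rw [hLeqV] at this
        exact lt_irrefl _ this
      · exact h.symm
      · exfalso
        exact absurd (hUnn xt hxt') (not_le.2 h)
    have hLleU : v xt * u xt ^ (p - 1) - u xt
        ≤ v (reflPt n lam₀ xt) * u (reflPt n lam₀ xt) ^ (p - 1) - u (reflPt n lam₀ xt) := by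
      rw [hUeq, hW0v]
    obtain ⟨hUsym, _⟩ := keyLemma n hα0 hcα huc hu_L.2 hxt' hUeq hUnn
      (heq_u xt) (heq_u (reflPt n lam₀ xt)) hLleU
    exact fun x => ⟨hUsym x, hVsym x⟩
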